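/- Let c₁ < c₂ be real numbers, let g be a real polynomial that is not identically zero, let k < p be natural numbers, let α : ℕ → ℝ satisfy α_{k+1} ≠ 0, and let f(ξ) = Σ_{m=k+1}^{p} α_m ξ^m. Then, as δ → 0⁺, the squared H¹ seminorm of φ(ξ₁,ξ₂) = g(ξ₁)f(ξ₂) on the rectangle [c₁,c₂] × [0,δ] is Θ of δ^{-2} times its squared L² norm on the same rectangle; i.e. the function δ ↦ ∫_{c₁}^{c₂}∫_0^δ ((g′)²f² + g²(f′)²) is IsTheta to δ ↦ δ^{-2}·∫_{c₁}^{c₂}∫_0^δ g²f². -/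

import Mathlib

open Topology Asymptotics Polynomial MeasureTheory intervalIntegral Set Function

private lemma moment_bounds' (r : ℝ → ℝ) (hrc : Continuous r) (hr : r 0 ≠ 0) (n : ℕ) :
    ∃ c C ε : ℝ, 0 < c ∧ 0 < C ∧ 0 < ε ∧ ∀ δ : ℝ, 0 < δ → δ ≤ ε →
      c * δ ^ (2 * n + 1) ≤ (∫ ξ in (0:ℝ)..δ, (ξ ^ n * r ξ) ^ 2) ∧
      (∫ ξ in (0:ℝ)..δ, (ξ ^ n * r ξ) ^ 2) ≤ C * δ ^ (2 * n + 1) := by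
  set s : ℝ := (r 0) ^ 2 with hs
  have hspos : 0 < s := by positivity
  have hcont : ContinuousAt (fun ξ => (r ξ) ^ 2) 0 := (hrc.pow 2).continuousAt
  rw [Metric.continuousAt_iff] at hcont
  obtain ⟨ε, hε, hball⟩ := hcont (s / 2) (by positivity)
  have hbd : ∀ ξ : ℝ, |ξ| ≤ ε / 2 → s / 2 ≤ (r ξ) ^ 2 ∧ (r ξ) ^ 2 ≤ 2 * s := by
    intro ξ hξ
    have := hball (x := ξ) (by rw [Real.dist_eq, sub_zero]; linarith)
    rw [Real.dist_eq] at this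
    have := abs_sub_lt_iff.mp this
    constructor <;> nlinarith [this.1, this.2]
  refine ⟨s / 2 / (2 * n + 1), 2 * s / (2 * n + 1), ε / 2, by positivity, by positivity,
    by positivity, ?_⟩
  intro δ hδ hδε
  have hint : IntervalIntegrable (fun ξ => (ξ ^ n * r ξ) ^ 2) volume 0 δ :=
    (((continuous_pow n).mul hrc).pow 2).intervalIntegrable 0 δ
  have hintl : IntervalIntegrable (fun ξ : ℝ => s / 2 * ξ ^ (2 * n)) volume 0 δ :=
    (continuous_const.mul (continuous_pow _)).intervalIntegrable 0 δ
  have hintu : IntervalIntegrable (fun ξ : ℝ => 2 * s * ξ ^ (2 * n)) volume 0 δ :=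
    (continuous_const.mul (continuous_pow _)).intervalIntegrable 0 δ
  have hpow : ∫ ξ in (0:ℝ)..δ, ξ ^ (2 * n) = δ ^ (2 * n + 1) / (2 * n + 1) := by
    rw [integral_pow]; simp
  have key : ∀ ξ ∈ Icc (0:ℝ) δ,
      (ξ ^ n * r ξ) ^ 2 = ξ ^ (2 * n) * (r ξ) ^ 2 := by
    intro ξ _
    rw [mul_pow, ← pow_mul, Nat.mul_comm]
  constructor
  · have hmono := integral_mono_on (μ := volume) hδ.le hintl hint (fun ξ hξ => by
      rw [key ξ hξ]
      have h1 : s / 2 ≤ (r ξ) ^ 2 := (hbd ξ (by rw [abs_of_nonneg hξ.1]; linarith [hξ.2])).1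
      have h2 : (0:ℝ) ≤ ξ ^ (2 * n) := pow_nonneg hξ.1 _
      nlinarith)
    calc s / 2 / (2 * n + 1) * δ ^ (2 * n + 1)
        = ∫ ξ in (0:ℝ)..δ, s / 2 * ξ ^ (2 * n) := by
          rw [intervalIntegral.integral_const_mul, hpow]; ring
      _ ≤ _ := hmono
  · have hmono := integral_mono_on (μ := volume) hδ.le hint hintu (fun ξ hξ => by
      rw [key ξ hξ]
      have h1 : (r ξ) ^ 2 ≤ 2 * s := (hbd ξ (by rw [abs_of_nonneg hξ.1]; linarith [hξ.2])).2
      have h2 : (0:ℝ) ≤ ξ ^ (2 * n) := pow_nonneg hξ.1 _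
      nlinarith)
    calc (∫ ξ in (0:ℝ)..δ, (ξ ^ n * r ξ) ^ 2)
        ≤ ∫ ξ in (0:ℝ)..δ, 2 * s * ξ ^ (2 * n) := hmono
      _ = 2 * s / (2 * n + 1) * δ ^ (2 * n + 1) := by rw [intervalIntegral.integral_const_mul, hpow]; ring

private lemma poly_sq_integral_pos' (g : Polynomial ℝ) (hg : g ≠ 0) (c₁ c₂ : ℝ) (hc : c₁ < c₂) :
    0 < ∫ x in c₁..c₂, (g.eval x) ^ 2 := by
  rw [integral_pos_iff_support_of_nonneg_ae
    (Filter.Eventually.of_forall fun x => sq_nonneg _)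
    ((g.continuous.pow 2).intervalIntegrable _ _)]
  refine ⟨hc, ?_⟩
  have hroots : Set.Finite {x : ℝ | g.IsRoot x} := g.finite_setOf_isRoot hg
  have hsub : Ioc c₁ c₂ \ {x : ℝ | g.IsRoot x} ⊆
      support (fun x => (g.eval x) ^ 2) ∩ Ioc c₁ c₂ := by
    rintro x ⟨hx, hroot⟩
    exact ⟨pow_ne_zero _ hroot, hx⟩
  have h1 : volume (Ioc c₁ c₂ \ {x : ℝ | g.IsRoot x}) = volume (Ioc c₁ c₂) :=
    measure_diff_null (hroots.measure_zero _)
  calc (0:ENNReal) < volume (Ioc c₁ c₂) := by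
        rw [Real.volume_Ioc]; simp [hc, sub_pos]
    _ = volume (Ioc c₁ c₂ \ {x : ℝ | g.IsRoot x}) := h1.symm
    _ ≤ _ := measure_mono hsub

/-- Norm equivalence (Lemma 5.1, configuration (a)): for `φ(ξ₁,ξ₂) = g(ξ₁) f(ξ₂)`
with `g` a nonzero polynomial and `f(ξ) = ∑_{m=k+1}^{p} α_m ξ^m`, `α_{k+1} ≠ 0`,
the squared `H¹` seminorm of `φ` on `[c₁,c₂] × [0,δ]` is `Θ` of `δ^{-2}` times its
squared `L²` norm on the same rectangle, as `δ → 0⁺`. -/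
theorem h1_l2_equivalence_config_a (c₁ c₂ : ℝ) (hc : c₁ < c₂)
    (g : Polynomial ℝ) (hg : g ≠ 0)
    (k p : ℕ) (hkp : k < p) (α : ℕ → ℝ) (hα : α (k + 1) ≠ 0) :
    (fun δ : ℝ => ∫ ξ₁ in c₁..c₂, ∫ ξ₂ in (0:ℝ)..δ,
        ((Polynomial.derivative g).eval ξ₁) ^ 2 *
          (∑ m ∈ Finset.Icc (k + 1) p, α m * ξ₂ ^ m) ^ 2 +
        (g.eval ξ₁) ^ 2 *
          (deriv (fun t : ℝ => ∑ m ∈ Finset.Icc (k + 1) p, α m * t ^ m) ξ₂) ^ 2)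
      =Θ[𝓝[>] (0:ℝ)]
    (fun δ : ℝ => δ ^ (-2 : ℤ) *
        ∫ ξ₁ in c₁..c₂, ∫ ξ₂ in (0:ℝ)..δ,
          (g.eval ξ₁) ^ 2 * (∑ m ∈ Finset.Icc (k + 1) p, α m * ξ₂ ^ m) ^ 2) := by
  -- the univariate factor and its derivative
  set f : ℝ → ℝ := fun t => ∑ m ∈ Finset.Icc (k+1) p, α m * t ^ m with hf
  set D : ℝ → ℝ := fun t => ∑ m ∈ Finset.Icc (k+1) p, α m * (m * t ^ (m-1)) with hDdef
  have hD : ∀ t, deriv f t = D t := by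
    intro t
    have : HasDerivAt f (D t) t :=
      HasDerivAt.fun_sum fun m _ => (hasDerivAt_pow m t).const_mul (α m)
    exact this.deriv
  -- factor out the leading powers
  set h : ℝ → ℝ := fun t => ∑ m ∈ Finset.Icc (k+1) p, α m * t ^ (m - (k+1)) with hhdef
  set w : ℝ → ℝ := fun t => ∑ m ∈ Finset.Icc (k+1) p, α m * m * t ^ (m - 1 - k) with hwdef
  have hfact : ∀ t : ℝ, f t = t ^ (k+1) * h t := by
    intro t
    rw [hf, hhdef]; simp only []
    rw [Finset.mul_sum]
    refine Finset.sum_congr rfl fun m hm => ?_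
    obtain ⟨h1, -⟩ := Finset.mem_Icc.mp hm
    have hp : t ^ m = t ^ (k+1) * t ^ (m - (k+1)) := by
      rw [← pow_add]; congr 1; omega
    rw [hp]; ring
  have wfact : ∀ t : ℝ, D t = t ^ k * w t := by
    intro t
    rw [hDdef, hwdef]; simp only []
    rw [Finset.mul_sum]
    refine Finset.sum_congr rfl fun m hm => ?_
    obtain ⟨h1, -⟩ := Finset.mem_Icc.mp hm
    have hp : t ^ (m - 1) = t ^ k * t ^ (m - 1 - k) := by
      rw [← pow_add]; congr 1; omega
    rw [hp]; ring
  have hmem : k + 1 ∈ Finset.Icc (k+1) p := Finset.mem_Icc.mpr ⟨le_refl _, hkp⟩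
  have h0ne : h 0 ≠ 0 := by
    have h0 : h 0 = α (k+1) := by
      rw [hhdef]; simp only []
      rw [Finset.sum_eq_single_of_mem (k+1) hmem (fun m hm hne => by
        have he : m - (k+1) ≠ 0 := by have := (Finset.mem_Icc.mp hm).1; omega
        rw [zero_pow he, mul_zero])]
      simp
    rw [h0]; exact hα
  have w0ne : w 0 ≠ 0 := by
    have w0 : w 0 = α (k+1) * (k+1) := by
      rw [hwdef]; simp only []
      rw [Finset.sum_eq_single_of_mem (k+1) hmem (fun m hm hne => by
        have he : m - 1 - k ≠ 0 := by have := (Finset.mem_Icc.mp hm).1; omega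
        rw [zero_pow he, mul_zero])]
      simp
    rw [w0]; positivity
  have hhc : Continuous h :=
    continuous_finset_sum _ fun m _ => continuous_const.mul (continuous_pow _)
  have hwc : Continuous w :=
    continuous_finset_sum _ fun m _ => continuous_const.mul (continuous_pow _)
  -- the one-dimensional moments
  set Fp : ℝ → ℝ := fun δ => ∫ t in (0:ℝ)..δ, (t ^ (k+1) * h t) ^ 2 with hFp
  set Gp : ℝ → ℝ := fun δ => ∫ t in (0:ℝ)..δ, (t ^ k * w t) ^ 2 with hGp
  set A : ℝ := ∫ x in c₁..c₂, ((Polynomial.derivative g).eval x) ^ 2 with hAdef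
  set B : ℝ := ∫ x in c₁..c₂, (g.eval x) ^ 2 with hBdef
  have hA : 0 ≤ A :=
    intervalIntegral.integral_nonneg hc.le fun x _ => sq_nonneg _
  have hB : 0 < B := poly_sq_integral_pos' g hg c₁ c₂ hc
  -- rewrite the LHS
  have contF : Continuous fun t : ℝ => (t ^ (k+1) * h t) ^ 2 :=
    ((continuous_pow _).mul hhc).pow 2
  have contG : Continuous fun t : ℝ => (t ^ k * w t) ^ 2 :=
    ((continuous_pow _).mul hwc).pow 2
  have hinner : ∀ (x δ : ℝ),
      (∫ ξ₂ in (0:ℝ)..δ, ((Polynomial.derivative g).eval x) ^ 2 * (f ξ₂) ^ 2 +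
        (g.eval x) ^ 2 * (deriv f ξ₂) ^ 2)
      = ((Polynomial.derivative g).eval x) ^ 2 * Fp δ + (g.eval x) ^ 2 * Gp δ := by
    intro x δ
    have e1 : (∫ ξ₂ in (0:ℝ)..δ, ((Polynomial.derivative g).eval x) ^ 2 * (f ξ₂) ^ 2 +
        (g.eval x) ^ 2 * (deriv f ξ₂) ^ 2)
        = ∫ ξ₂ in (0:ℝ)..δ, (((Polynomial.derivative g).eval x) ^ 2 * (ξ₂ ^ (k+1) * h ξ₂) ^ 2 +
            (g.eval x) ^ 2 * (ξ₂ ^ k * w ξ₂) ^ 2) :=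
      intervalIntegral.integral_congr fun t _ => by rw [hD t, hfact t, wfact t]
    rw [e1, intervalIntegral.integral_add
        ((continuous_const.fun_mul contF).intervalIntegrable _ _)
        ((continuous_const.fun_mul contG).intervalIntegrable _ _),
      intervalIntegral.integral_const_mul, intervalIntegral.integral_const_mul]
  have hLHS : ∀ δ : ℝ,
      (∫ ξ₁ in c₁..c₂, ∫ ξ₂ in (0:ℝ)..δ,
        ((Polynomial.derivative g).eval ξ₁) ^ 2 *
          (∑ m ∈ Finset.Icc (k + 1) p, α m * ξ₂ ^ m) ^ 2 +
        (g.eval ξ₁) ^ 2 *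
          (deriv (fun t : ℝ => ∑ m ∈ Finset.Icc (k + 1) p, α m * t ^ m) ξ₂) ^ 2)
      = A * Fp δ + B * Gp δ := by
    intro δ
    have e1 : (∫ ξ₁ in c₁..c₂, ∫ ξ₂ in (0:ℝ)..δ,
        ((Polynomial.derivative g).eval ξ₁) ^ 2 *
          (∑ m ∈ Finset.Icc (k + 1) p, α m * ξ₂ ^ m) ^ 2 +
        (g.eval ξ₁) ^ 2 *
          (deriv (fun t : ℝ => ∑ m ∈ Finset.Icc (k + 1) p, α m * t ^ m) ξ₂) ^ 2)
        = ∫ ξ₁ in c₁..c₂, (((Polynomial.derivative g).eval ξ₁) ^ 2 * Fp δ +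
            (g.eval ξ₁) ^ 2 * Gp δ) :=
      intervalIntegral.integral_congr fun x _ => hinner x δ
    rw [e1, intervalIntegral.integral_add
        ((((Polynomial.derivative g).continuous.fun_pow 2).fun_mul continuous_const).intervalIntegrable _ _)
        (((g.continuous.fun_pow 2).fun_mul continuous_const).intervalIntegrable _ _),
      intervalIntegral.integral_mul_const, intervalIntegral.integral_mul_const]
  have hRHS : ∀ δ : ℝ,
      (∫ ξ₁ in c₁..c₂, ∫ ξ₂ in (0:ℝ)..δ,
          (g.eval ξ₁) ^ 2 * (∑ m ∈ Finset.Icc (k + 1) p, α m * ξ₂ ^ m) ^ 2)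
      = B * Fp δ := by
    intro δ
    have e1 : (∫ ξ₁ in c₁..c₂, ∫ ξ₂ in (0:ℝ)..δ,
          (g.eval ξ₁) ^ 2 * (∑ m ∈ Finset.Icc (k + 1) p, α m * ξ₂ ^ m) ^ 2)
        = ∫ ξ₁ in c₁..c₂, (g.eval ξ₁) ^ 2 * Fp δ := by
      refine intervalIntegral.integral_congr fun x _ => ?_
      have e2 : (∫ ξ₂ in (0:ℝ)..δ,
          (g.eval x) ^ 2 * (∑ m ∈ Finset.Icc (k + 1) p, α m * ξ₂ ^ m) ^ 2)
          = ∫ ξ₂ in (0:ℝ)..δ, (g.eval x) ^ 2 * (ξ₂ ^ (k+1) * h ξ₂) ^ 2 :=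
        intervalIntegral.integral_congr fun t _ => by rw [← hfact t]
      rw [e2, intervalIntegral.integral_const_mul]
    rw [e1, intervalIntegral.integral_mul_const]
  rw [show (fun δ : ℝ => ∫ ξ₁ in c₁..c₂, ∫ ξ₂ in (0:ℝ)..δ,
        ((Polynomial.derivative g).eval ξ₁) ^ 2 *
          (∑ m ∈ Finset.Icc (k + 1) p, α m * ξ₂ ^ m) ^ 2 +
        (g.eval ξ₁) ^ 2 *
          (deriv (fun t : ℝ => ∑ m ∈ Finset.Icc (k + 1) p, α m * t ^ m) ξ₂) ^ 2)
      = fun δ => A * Fp δ + B * Gp δ from funext hLHS,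
    show (fun δ : ℝ => δ ^ (-2 : ℤ) *
        ∫ ξ₁ in c₁..c₂, ∫ ξ₂ in (0:ℝ)..δ,
          (g.eval ξ₁) ^ 2 * (∑ m ∈ Finset.Icc (k + 1) p, α m * ξ₂ ^ m) ^ 2)
      = fun δ => δ ^ (-2 : ℤ) * (B * Fp δ) from funext fun δ => by rw [hRHS δ]]
  -- moment bounds
  obtain ⟨cF, CF, εF, hcF, hCF, hεF, hFbd⟩ := moment_bounds' h hhc h0ne (k+1)
  obtain ⟨cG, CG, εG, hcG, hCG, hεG, hGbd⟩ := moment_bounds' w hwc w0ne k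
  set ε : ℝ := min 1 (min εF εG) with hε
  have hεpos : (0:ℝ) < ε := by positivity
  have hmem' : Ioc (0:ℝ) ε ∈ 𝓝[>] (0:ℝ) := Ioc_mem_nhdsGT hεpos
  have key : ∀ δ ∈ Ioc (0:ℝ) ε,
      B * cF * δ ^ (2*k+1) ≤ δ ^ (-2:ℤ) * (B * Fp δ) ∧
      δ ^ (-2:ℤ) * (B * Fp δ) ≤ B * CF * δ ^ (2*k+1) ∧
      B * cG * δ ^ (2*k+1) ≤ A * Fp δ + B * Gp δ ∧
      A * Fp δ + B * Gp δ ≤ (A * CF + B * CG) * δ ^ (2*k+1) := by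
    rintro δ ⟨hδ0, hδε⟩
    have hδ1 : δ ≤ 1 := le_trans hδε (min_le_left _ _)
    have hδF : δ ≤ εF := le_trans hδε (le_trans (min_le_right _ _) (min_le_left _ _))
    have hδG : δ ≤ εG := le_trans hδε (le_trans (min_le_right _ _) (min_le_right _ _))
    obtain ⟨hF1, hF2⟩ := hFbd δ hδ0 hδF
    obtain ⟨hG1, hG2⟩ := hGbd δ hδ0 hδG
    have hzero : δ ^ (-2:ℤ) = (δ ^ 2)⁻¹ := by
      rw [show (-2 : ℤ) = -(2:ℕ) by norm_num, zpow_neg, zpow_natCast]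
    have hE3 : δ ^ (2*(k+1)+1) = δ ^ 2 * δ ^ (2*k+1) := by
      rw [show 2*(k+1)+1 = 2 + (2*k+1) by ring, pow_add]
    have hcancel : δ ^ (-2:ℤ) * δ ^ (2*(k+1)+1) = δ ^ (2*k+1) := by
      rw [hzero, hE3]
      field_simp
    have hE1pos : (0:ℝ) < δ ^ (2*k+1) := pow_pos hδ0 _
    have hE2pos : (0:ℝ) < δ ^ 2 := pow_pos hδ0 _
    have hzpos : (0:ℝ) < δ ^ (-2:ℤ) := by rw [hzero]; positivity
    refine ⟨?_, ?_, ?_, ?_⟩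
    · calc B * cF * δ ^ (2*k+1) = δ ^ (-2:ℤ) * (B * (cF * δ ^ (2*(k+1)+1))) := by
            rw [show δ ^ (-2:ℤ) * (B * (cF * δ ^ (2*(k+1)+1)))
                = B * cF * (δ ^ (-2:ℤ) * δ ^ (2*(k+1)+1)) by ring, hcancel]
        _ ≤ δ ^ (-2:ℤ) * (B * Fp δ) := by
            have : B * (cF * δ ^ (2*(k+1)+1)) ≤ B * Fp δ :=
              mul_le_mul_of_nonneg_left hF1 hB.le
            exact mul_le_mul_of_nonneg_left this hzpos.le
    · calc δ ^ (-2:ℤ) * (B * Fp δ) ≤ δ ^ (-2:ℤ) * (B * (CF * δ ^ (2*(k+1)+1))) := by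
            have : B * Fp δ ≤ B * (CF * δ ^ (2*(k+1)+1)) :=
              mul_le_mul_of_nonneg_left hF2 hB.le
            exact mul_le_mul_of_nonneg_left this hzpos.le
        _ = B * CF * δ ^ (2*k+1) := by
            rw [show δ ^ (-2:ℤ) * (B * (CF * δ ^ (2*(k+1)+1)))
                = B * CF * (δ ^ (-2:ℤ) * δ ^ (2*(k+1)+1)) by ring, hcancel]
    · have hFpos : 0 ≤ Fp δ := le_trans (by positivity) hF1
      have s1 : B * (cG * δ ^ (2*k+1)) ≤ B * Gp δ := mul_le_mul_of_nonneg_left hG1 hB.le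
      have s2 : 0 ≤ A * Fp δ := mul_nonneg hA hFpos
      have e : B * cG * δ ^ (2*k+1) = B * (cG * δ ^ (2*k+1)) := by ring
      linarith
    · have hδ2 : δ ^ 2 ≤ 1 := by nlinarith
      have h3 : δ ^ (2*(k+1)+1) ≤ δ ^ (2*k+1) := by
        rw [hE3]
        nlinarith [mul_le_mul_of_nonneg_right hδ2 hE1pos.le]
      have t1 : A * Fp δ ≤ A * CF * δ ^ (2*k+1) := by
        calc A * Fp δ ≤ A * (CF * δ ^ (2*(k+1)+1)) := mul_le_mul_of_nonneg_left hF2 hA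
          _ = A * CF * δ ^ (2*(k+1)+1) := by ring
          _ ≤ A * CF * δ ^ (2*k+1) :=
              mul_le_mul_of_nonneg_left h3 (mul_nonneg hA hCF.le)
      have t2 : B * Gp δ ≤ B * CG * δ ^ (2*k+1) := by
        calc B * Gp δ ≤ B * (CG * δ ^ (2*k+1)) := mul_le_mul_of_nonneg_left hG2 hB.le
          _ = B * CG * δ ^ (2*k+1) := by ring
      have e : (A * CF + B * CG) * δ ^ (2*k+1)
          = A * CF * δ ^ (2*k+1) + B * CG * δ ^ (2*k+1) := by ring
      linarith
  constructor
  · rw [Asymptotics.isBigO_iff]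
    refine ⟨(A * CF + B * CG) / (B * cF), ?_⟩
    filter_upwards [hmem'] with δ hδ
    obtain ⟨k1, k2, k3, k4⟩ := key δ hδ
    have hE1pos : (0:ℝ) < δ ^ (2*k+1) := pow_pos hδ.1 _
    have hLnn : 0 ≤ A * Fp δ + B * Gp δ := le_trans (by positivity) k3
    have hRpos : 0 < δ ^ (-2:ℤ) * (B * Fp δ) := lt_of_lt_of_le (by positivity) k1
    rw [Real.norm_eq_abs, Real.norm_eq_abs, abs_of_nonneg hLnn, abs_of_pos hRpos]
    have hne : B * cF ≠ 0 := by positivity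
    calc A * Fp δ + B * Gp δ ≤ (A * CF + B * CG) * δ ^ (2*k+1) := k4
      _ = (A * CF + B * CG) / (B * cF) * (B * cF * δ ^ (2*k+1)) := by
          rw [← mul_assoc, div_mul_cancel₀ _ hne]
      _ ≤ (A * CF + B * CG) / (B * cF) * (δ ^ (-2:ℤ) * (B * Fp δ)) := by
          have hqnn : 0 ≤ (A * CF + B * CG) / (B * cF) := by positivity
          exact mul_le_mul_of_nonneg_left k1 hqnn
  · rw [Asymptotics.isBigO_iff]
    refine ⟨(B * CF) / (B * cG), ?_⟩
    filter_upwards [hmem'] with δ hδ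
    obtain ⟨k1, k2, k3, k4⟩ := key δ hδ
    have hE1pos : (0:ℝ) < δ ^ (2*k+1) := pow_pos hδ.1 _
    have hLpos : 0 < A * Fp δ + B * Gp δ := lt_of_lt_of_le (by positivity) k3
    have hRpos : 0 < δ ^ (-2:ℤ) * (B * Fp δ) := lt_of_lt_of_le (by positivity) k1
    rw [Real.norm_eq_abs, Real.norm_eq_abs, abs_of_pos hRpos, abs_of_pos hLpos]
    have hne : B * cG ≠ 0 := by positivity
    calc δ ^ (-2:ℤ) * (B * Fp δ) ≤ B * CF * δ ^ (2*k+1) := k2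
      _ = (B * CF) / (B * cG) * (B * cG * δ ^ (2*k+1)) := by
          rw [← mul_assoc, div_mul_cancel₀ _ hne]
      _ ≤ (B * CF) / (B * cG) * (A * Fp δ + B * Gp δ) := by
          have hqnn : 0 ≤ (B * CF) / (B * cG) := by positivity
          exact mul_le_mul_of_nonneg_left k3 hqnn
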